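/- Let d, K ≥ 1 be natural numbers and let x_k ∈ ℝ^d for k ∈ {1,…,K} satisfy ‖x_k‖₂ ≤ 1. Let λ > 0 and define the d×d matrices V_k := λ I + ∑_{j=1}^{k} x_j x_jᵀ (each V_k is positive definite and hence invertible). Then ∑_{k=1}^{K} √(x_kᵀ V_k⁻¹ x_k) ≤ √(d K log(1 + K/(d λ))). -/

import Mathlib

open Matrix

section Aux

set_option linter.unusedSectionVars false

variable {n : Type*} [Fintype n] [DecidableEq n]

lemma epl_vecMulVec_mulVec (v w u : n → ℝ) :
    vecMulVec v w *ᵥ u = (w ⬝ᵥ u) • v := by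
  ext i
  simp [vecMulVec_apply, mulVec, dotProduct, Finset.mul_sum, mul_assoc, mul_comm, mul_left_comm]

lemma epl_vecMulVec_posSemidef (v : n → ℝ) : (vecMulVec v v).PosSemidef := by
  refine PosSemidef.of_dotProduct_mulVec_nonneg ?_ ?_
  · ext i j
    simp [vecMulVec_apply, conjTranspose_apply, mul_comm]
  · intro y
    rw [epl_vecMulVec_mulVec]
    simp only [star_trivial, dotProduct_smul, smul_eq_mul]
    rw [dotProduct_comm]
    exact mul_self_nonneg _

lemma epl_smul_one_posDef {lam : ℝ} (hlam : 0 < lam) :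
    (lam • (1 : Matrix n n ℝ)).PosDef := by
  rw [smul_one_eq_diagonal]
  exact posDef_diagonal_iff.mpr fun _ => hlam

lemma epl_dot_inv_nonneg {A : Matrix n n ℝ} (hA : A.PosDef) (v : n → ℝ) :
    0 ≤ v ⬝ᵥ (A⁻¹ *ᵥ v) := by
  have := hA.inv.posSemidef.dotProduct_mulVec_nonneg v
  simpa using this

lemma epl_step {A : Matrix n n ℝ} (hA : A.PosDef) (v : n → ℝ) :
    v ⬝ᵥ ((A + vecMulVec v v)⁻¹ *ᵥ v) ≤
      Real.log (A + vecMulVec v v).det - Real.log A.det := by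
  set s : ℝ := v ⬝ᵥ (A⁻¹ *ᵥ v) with hs
  have hs0 : 0 ≤ s := epl_dot_inv_nonneg hA v
  have hs1 : (0:ℝ) < 1 + s := by linarith
  set B : Matrix n n ℝ := A + vecMulVec v v with hB
  have hBpd : B.PosDef := hA.add_posSemidef (epl_vecMulVec_posSemidef v)
  have hmul : B *ᵥ (A⁻¹ *ᵥ v) = (1 + s) • v := by
    rw [hB, add_mulVec, mulVec_mulVec, A.mul_nonsing_inv hA.det_pos.ne'.isUnit,
      one_mulVec, epl_vecMulVec_mulVec, ← hs, add_smul, one_smul]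
  have hinv : B⁻¹ *ᵥ v = (1 + s)⁻¹ • (A⁻¹ *ᵥ v) := by
    have h1 : B⁻¹ *ᵥ (B *ᵥ (A⁻¹ *ᵥ v)) = A⁻¹ *ᵥ v := by
      rw [mulVec_mulVec, B.nonsing_inv_mul hBpd.det_pos.ne'.isUnit, one_mulVec]
    rw [hmul, mulVec_smul] at h1
    rw [← h1, smul_smul, inv_mul_cancel₀ hs1.ne', one_smul]
  have hq : v ⬝ᵥ (B⁻¹ *ᵥ v) = s / (1 + s) := by
    rw [hinv, dotProduct_smul, smul_eq_mul, ← hs]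
    field_simp
  have hdet : B.det = A.det * (1 + s) := by
    have h11 : (1 + replicateRow Unit v * A⁻¹ * replicateCol Unit v).det = 1 + s := by
      rw [Matrix.mul_assoc, ← replicateCol_mulVec, det_unique]
      simp [Matrix.add_apply, Matrix.one_apply_eq, replicateRow_mul_replicateCol_apply, hs]
    rw [hB, vecMulVec_eq Unit v v, det_add_replicateCol_mul_replicateRow hA.det_pos.ne'.isUnit, h11]
  have hlog : Real.log B.det - Real.log A.det = Real.log (1 + s) := by
    rw [hdet, Real.log_mul hA.det_pos.ne' hs1.ne']
    ring
  rw [hq, hlog]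
  have h2 : Real.log (1 + s)⁻¹ ≤ (1 + s)⁻¹ - 1 :=
    Real.log_le_sub_one_of_pos (by positivity)
  rw [Real.log_inv] at h2
  have h3 : s / (1 + s) = 1 - (1 + s)⁻¹ := by field_simp; ring
  linarith

lemma epl_trace_eq_sum_eigenvalues {A : Matrix n n ℝ} (hA : A.IsHermitian) :
    A.trace = ∑ i, hA.eigenvalues i := by
  simpa using hA.trace_eq_sum_eigenvalues

lemma epl_det_le_trace_pow [Nonempty n] {A : Matrix n n ℝ} (hA : A.PosDef) :
    A.det ≤ (A.trace / (Fintype.card n)) ^ (Fintype.card n) := by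
  set c : ℕ := Fintype.card n with hc
  have hc0 : 0 < c := Fintype.card_pos
  have hcR : (0:ℝ) < (c:ℝ) := by exact_mod_cast hc0
  set μ : n → ℝ := hA.isHermitian.eigenvalues with hμ
  have hμpos : ∀ i, 0 < μ i := fun i => hA.eigenvalues_pos i
  have hdet : A.det = ∏ i, μ i := by
    have := hA.isHermitian.det_eq_prod_eigenvalues
    simpa using this
  have htr : A.trace = ∑ i, μ i := epl_trace_eq_sum_eigenvalues hA.isHermitian
  have hamgm : ∏ i, μ i ^ ((c:ℝ)⁻¹) ≤ ∑ i, (c:ℝ)⁻¹ * μ i := by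
    refine Real.geom_mean_le_arith_mean_weighted Finset.univ _ _
      (fun i _ => by positivity) ?_ (fun i _ => (hμpos i).le)
    simp only [Finset.sum_const, Finset.card_univ, ← hc, nsmul_eq_mul]
    field_simp
  have hLHS : (∏ i, μ i ^ ((c:ℝ)⁻¹)) ^ c = ∏ i, μ i := by
    rw [← Finset.prod_pow]
    refine Finset.prod_congr rfl fun i _ => ?_
    rw [← Real.rpow_natCast (μ i ^ ((c:ℝ)⁻¹)) c, ← Real.rpow_mul (hμpos i).le,
      inv_mul_cancel₀ hcR.ne', Real.rpow_one]
  have hRHS : ∑ i, (c:ℝ)⁻¹ * μ i = A.trace / c := by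
    rw [htr, ← Finset.mul_sum]
    ring
  calc A.det = (∏ i, μ i ^ ((c:ℝ)⁻¹)) ^ c := by rw [hLHS, hdet]
    _ ≤ (A.trace / c) ^ c := by
        exact pow_le_pow_left₀ (Finset.prod_nonneg fun i _ => Real.rpow_nonneg (hμpos i).le _)
          (by rw [← hRHS]; exact hamgm) c

end Aux


/-- **Elliptical Potential Lemma** (Lemma 8).  For unit-norm-bounded vectors
`x_1, …, x_K ∈ ℝ^d` and `V_k = λ I + ∑_{j=1}^k x_j x_jᵀ`, one has
`∑_{k=1}^K √(x_kᵀ V_k⁻¹ x_k) ≤ √(d K log(1 + K/(dλ)))`. -/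
theorem elliptical_potential_lemma
    (d K : ℕ) (hd : 1 ≤ d) (hK : 1 ≤ K)
    (x : Fin K → Fin d → ℝ)
    (hx : ∀ k : Fin K, Real.sqrt (∑ i, (x k i) ^ 2) ≤ 1)
    (lam : ℝ) (hlam : 0 < lam)
    (V : Fin K → Matrix (Fin d) (Fin d) ℝ)
    (hV : ∀ k : Fin K,
      V k = lam • (1 : Matrix (Fin d) (Fin d) ℝ) +
        ∑ j ∈ Finset.Iic k, Matrix.vecMulVec (x j) (x j)) :
    ∑ k : Fin K, Real.sqrt (x k ⬝ᵥ ((V k)⁻¹ *ᵥ x k)) ≤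
      Real.sqrt (d * K * Real.log (1 + K / (d * lam))) := by
  have hdR : (0:ℝ) < (d:ℝ) := by exact_mod_cast hd
  haveI : Nonempty (Fin d) := ⟨⟨0, hd⟩⟩
  have hKR : (0:ℝ) < (K:ℝ) := by exact_mod_cast hK
  -- extend x to ℕ
  set a : ℕ → (Fin d → ℝ) := fun j => if h : j < K then x ⟨j, h⟩ else 0 with ha
  set g : ℕ → Matrix (Fin d) (Fin d) ℝ :=
    fun m => lam • 1 + ∑ j ∈ Finset.range m, vecMulVec (a j) (a j) with hg
  have hgpd : ∀ m, (g m).PosDef := by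
    intro m
    refine (epl_smul_one_posDef hlam).add_posSemidef ?_
    refine Finset.sum_induction _ _ (fun p q hp hq => hp.add hq) Matrix.PosSemidef.zero ?_
    exact fun j _ => epl_vecMulVec_posSemidef (a j)
  have hstep : ∀ m, g (m + 1) = g m + vecMulVec (a m) (a m) := by
    intro m
    simp only [hg, Finset.sum_range_succ]
    rw [← add_assoc]
  have hVg : ∀ k : Fin K, V k = g ((k : ℕ) + 1) := by
    intro k
    rw [hV k, hg]
    congr 1
    refine Finset.sum_bij (fun (j : Fin K) _ => (j : ℕ)) ?_ ?_ ?_ ?_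
    · intro j hj
      simp only [Finset.mem_Iic] at hj
      simp only [Finset.mem_range]
      omega
    · intro j₁ _ j₂ _ h
      exact Fin.val_injective h
    · intro m hm
      simp only [Finset.mem_range] at hm
      have hmK : m < K := by omega
      refine ⟨⟨m, hmK⟩, ?_, rfl⟩
      simp only [Finset.mem_Iic]
      exact Fin.mk_le_of_le_val (by omega)
    · intro j hj
      simp only [ha]
      rw [dif_pos j.isLt]
  have key : ∀ k : Fin K,
      x k ⬝ᵥ ((V k)⁻¹ *ᵥ x k) ≤
        Real.log (g ((k : ℕ) + 1)).det - Real.log (g (k : ℕ)).det := by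
    intro k
    have hak : a (k : ℕ) = x k := by
      simp only [ha]
      rw [dif_pos k.isLt]
    rw [hVg k, hstep (k : ℕ), hak]
    exact epl_step (hgpd (k : ℕ)) (x k)
  -- telescoping
  have sumkey : ∑ k : Fin K, x k ⬝ᵥ ((V k)⁻¹ *ᵥ x k) ≤
      Real.log (g K).det - Real.log (g 0).det := by
    calc ∑ k : Fin K, x k ⬝ᵥ ((V k)⁻¹ *ᵥ x k)
        ≤ ∑ k : Fin K, (Real.log (g ((k : ℕ) + 1)).det - Real.log (g (k : ℕ)).det) :=
          Finset.sum_le_sum fun k _ => key k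
      _ = ∑ m ∈ Finset.range K, (Real.log (g (m + 1)).det - Real.log (g m).det) :=
          Fin.sum_univ_eq_sum_range (fun m => Real.log (g (m + 1)).det - Real.log (g m).det) K
      _ = Real.log (g K).det - Real.log (g 0).det :=
          Finset.sum_range_sub (fun m => Real.log (g m).det) K
  -- value at 0
  have hg0 : Real.log (g 0).det = d * Real.log lam := by
    have : g 0 = lam • (1 : Matrix (Fin d) (Fin d) ℝ) := by simp [hg]
    rw [this, det_smul, det_one, mul_one, Real.log_pow]
    simp
  -- trace bound
  have htrace : (g K).trace ≤ d * lam + K := by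
    rw [hg]
    rw [Matrix.trace_add, Matrix.trace_smul, Matrix.trace_one, Matrix.trace_sum]
    have h1 : ∀ j ∈ Finset.range K, (vecMulVec (a j) (a j)).trace ≤ 1 := by
      intro j hj
      have hjK : j < K := Finset.mem_range.mp hj
      have : (vecMulVec (a j) (a j)).trace = ∑ i, (a j i) ^ 2 := by
        simp [Matrix.trace, Matrix.diag, vecMulVec_apply, sq]
      rw [this]
      simp only [ha]
      rw [dif_pos hjK]
      have hx1 := hx ⟨j, hjK⟩
      have hnn : (0:ℝ) ≤ ∑ i, (x ⟨j, hjK⟩ i) ^ 2 :=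
        Finset.sum_nonneg fun i _ => sq_nonneg _
      nlinarith [Real.sq_sqrt hnn, Real.sqrt_nonneg (∑ i, (x ⟨j, hjK⟩ i) ^ 2)]
    calc lam • (Fintype.card (Fin d) : ℝ) + ∑ j ∈ Finset.range K, (vecMulVec (a j) (a j)).trace
        ≤ lam • (Fintype.card (Fin d) : ℝ) + ∑ j ∈ Finset.range K, 1 :=
          add_le_add_right (Finset.sum_le_sum h1) _
      _ = d * lam + K := by
          simp [Fintype.card_fin, smul_eq_mul]
          ring
  -- det bound
  have hdetK : Real.log (g K).det ≤ d * Real.log (lam + K / d) := by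
    have hpos : (0:ℝ) < lam + K / d := by positivity
    have h1 : (g K).det ≤ (lam + K / d) ^ d := by
      calc (g K).det ≤ ((g K).trace / (Fintype.card (Fin d))) ^ (Fintype.card (Fin d)) :=
            epl_det_le_trace_pow (hgpd K)
        _ ≤ (lam + K / d) ^ d := by
            rw [Fintype.card_fin]
            refine pow_le_pow_left₀ ?_ ?_ d
            · have := (hgpd K).det_pos
              -- trace nonneg: trace/d ≥ ?  use trace = sum of positive eigenvalues
              have htr := epl_trace_eq_sum_eigenvalues (hgpd K).isHermitian
              have : (0:ℝ) ≤ (g K).trace := by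
                rw [htr]
                exact Finset.sum_nonneg fun i _ => ((hgpd K).eigenvalues_pos i).le
              positivity
            · have hKd : (K:ℝ) / d * d = K := div_mul_cancel₀ _ hdR.ne'
              rw [div_le_iff₀ hdR, add_mul, hKd]
              linarith
    calc Real.log (g K).det ≤ Real.log ((lam + K / d) ^ d) :=
          Real.log_le_log (hgpd K).det_pos h1
      _ = d * Real.log (lam + K / d) := by rw [Real.log_pow]
  -- combine the log bounds
  have hlogid : (d:ℝ) * Real.log (lam + K / d) - d * Real.log lam =
      d * Real.log (1 + K / (d * lam)) := by
    have hpos : (0:ℝ) < lam + K / d := by positivity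
    rw [← mul_sub, ← Real.log_div hpos.ne' hlam.ne']
    congr 2
    field_simp
  have hsum_le : ∑ k : Fin K, x k ⬝ᵥ ((V k)⁻¹ *ᵥ x k) ≤
      d * Real.log (1 + K / (d * lam)) := by
    calc ∑ k : Fin K, x k ⬝ᵥ ((V k)⁻¹ *ᵥ x k)
        ≤ Real.log (g K).det - Real.log (g 0).det := sumkey
      _ ≤ d * Real.log (lam + K / d) - d * Real.log lam := by rw [hg0]; linarith
      _ = d * Real.log (1 + K / (d * lam)) := hlogid
  -- nonnegativity of the quadratic forms
  have hq0 : ∀ k : Fin K, 0 ≤ x k ⬝ᵥ ((V k)⁻¹ *ᵥ x k) := by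
    intro k
    rw [hVg k]
    exact epl_dot_inv_nonneg (hgpd _) (x k)
  -- Cauchy-Schwarz
  have hS2 : (∑ k : Fin K, Real.sqrt (x k ⬝ᵥ ((V k)⁻¹ *ᵥ x k))) ^ 2 ≤
      (K : ℝ) * ∑ k : Fin K, x k ⬝ᵥ ((V k)⁻¹ *ᵥ x k) := by
    have h := sq_sum_le_card_mul_sum_sq
      (s := (Finset.univ : Finset (Fin K)))
      (f := fun k => Real.sqrt (x k ⬝ᵥ ((V k)⁻¹ *ᵥ x k)))
    have heq : ∀ k : Fin K, Real.sqrt (x k ⬝ᵥ ((V k)⁻¹ *ᵥ x k)) ^ 2 =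
        x k ⬝ᵥ ((V k)⁻¹ *ᵥ x k) := fun k => Real.sq_sqrt (hq0 k)
    simpa [Finset.card_univ, heq] using h
  have hSnn : 0 ≤ ∑ k : Fin K, Real.sqrt (x k ⬝ᵥ ((V k)⁻¹ *ᵥ x k)) :=
    Finset.sum_nonneg fun k _ => Real.sqrt_nonneg _
  calc ∑ k : Fin K, Real.sqrt (x k ⬝ᵥ ((V k)⁻¹ *ᵥ x k))
      = Real.sqrt ((∑ k : Fin K, Real.sqrt (x k ⬝ᵥ ((V k)⁻¹ *ᵥ x k))) ^ 2) :=
        (Real.sqrt_sq hSnn).symm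
    _ ≤ Real.sqrt (d * K * Real.log (1 + K / (d * lam))) := by
        apply Real.sqrt_le_sqrt
        calc (∑ k : Fin K, Real.sqrt (x k ⬝ᵥ ((V k)⁻¹ *ᵥ x k))) ^ 2
            ≤ (K : ℝ) * ∑ k : Fin K, x k ⬝ᵥ ((V k)⁻¹ *ᵥ x k) := hS2
          _ ≤ (K : ℝ) * (d * Real.log (1 + K / (d * lam))) :=
              mul_le_mul_of_nonneg_left hsum_le hKR.le
          _ = d * K * Real.log (1 + K / (d * lam)) := by ring
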